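/- Let μ > 0 and let ν, ξ : [0,∞) → [0,∞) with ν absolutely continuous, satisfying e^{μt} ν(t) ≤ e^{μs} ν(s) + ∫_s^t e^{μτ} ξ(τ) dτ for all 0 ≤ s < t. Then for all t > 0 and σ ≥ 0, ν(t+σ) ≤ e^{-μt} ν(σ) + C_μ · sup_{σ < s < t+σ} ∫_s^{s+1} ξ(τ) dτ, where C_μ = (1 - e^{-μ})^{-1} + 1. -/

import Mathlib

set_option maxHeartbeats 1000000


open Real Set MeasureTheory intervalIntegral

/-- Gronwall-type lemma with sliding averages. If `ν, ξ ≥ 0` on `[0,∞)`,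
`ν` is continuous (absolutely continuous in the paper), `ξ` is locally integrable, and
`e^{μt} ν(t) ≤ e^{μs} ν(s) + ∫_s^t e^{μτ} ξ(τ) dτ` for `0 ≤ s < t`, then for all
`t > 0` and `σ ≥ 0`,
`ν(t+σ) ≤ e^{-μt} ν(σ) + C_μ sup_{σ<s<t+σ} ∫_s^{s+1} ξ`, `C_μ = (1-e^{-μ})⁻¹ + 1`. -/
theorem stmt7 (μ : ℝ) (hμ : 0 < μ) (ν ξ : ℝ → ℝ)
    (hν : ∀ t, 0 ≤ t → 0 ≤ ν t) (hξ : ∀ t, 0 ≤ t → 0 ≤ ξ t)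
    (hνcont : ContinuousOn ν (Set.Ici 0))
    (hξint : ∀ a b : ℝ, IntervalIntegrable ξ MeasureTheory.volume a b)
    (hineq : ∀ s t : ℝ, 0 ≤ s → s < t →
      Real.exp (μ * t) * ν t ≤ Real.exp (μ * s) * ν s
        + ∫ τ in s..t, Real.exp (μ * τ) * ξ τ) :
    ∀ t σ : ℝ, 0 < t → 0 ≤ σ →
      ν (t + σ) ≤ Real.exp (-μ * t) * ν σ
        + ((1 - Real.exp (-μ))⁻¹ + 1)
          * sSup ((fun s => ∫ τ in s..(s + 1), ξ τ) '' Set.Ioo σ (t + σ)) := by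
  intro t σ ht hσ
  obtain ⟨f, hf⟩ : ∃ f : ℝ → ℝ, f = fun s => ∫ τ in s..(s + 1), ξ τ := ⟨_, rfl⟩
  rw [← hf]
  obtain ⟨b, hb⟩ : ∃ b : ℝ, b = t + σ := ⟨_, rfl⟩
  rw [← hb]
  obtain ⟨M, hM⟩ : ∃ M : ℝ, M = sSup (f '' Set.Ioo σ b) := ⟨_, rfl⟩
  rw [← hM]
  have hab : σ < b := by rw [hb]; linarith
  -- continuity of f
  have hFcont : Continuous fun x => ∫ τ in (0:ℝ)..x, ξ τ :=
    intervalIntegral.continuous_primitive (fun u v => hξint u v) 0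
  have hfeq : f = fun s => (∫ τ in (0:ℝ)..(s+1), ξ τ) - ∫ τ in (0:ℝ)..s, ξ τ := by
    funext s
    rw [hf]
    show (∫ τ in s..(s + 1), ξ τ) = _
    rw [← intervalIntegral.integral_interval_sub_left (hξint 0 (s+1)) (hξint 0 s)]
  have hfcont : Continuous f := by
    rw [hfeq]
    exact (hFcont.comp (continuous_id.add continuous_const)).sub hFcont
  -- boundedness of the image
  have hbdd : BddAbove (f '' Set.Ioo σ b) := by
    have h1 : BddAbove (f '' Set.Icc σ b) :=
      (isCompact_Icc.image hfcont).bddAbove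
    exact h1.mono (Set.image_mono Set.Ioo_subset_Icc_self)
  -- nonnegativity of f for s ≥ 0
  have hfnn : ∀ s : ℝ, 0 ≤ s → 0 ≤ f s := by
    intro s hs
    rw [hf]
    apply intervalIntegral.integral_nonneg (by linarith)
    intro τ hτ
    exact hξ τ (le_trans hs hτ.1)
  -- M is nonnegative
  have hMnn : 0 ≤ M := by
    have h0 : 0 < min t 1 / 2 := by positivity
    have hmem : σ + min t 1 / 2 ∈ Set.Ioo σ b := by
      constructor
      · linarith
      · have : min t 1 / 2 < t := by
          have := min_le_left t 1
          linarith
        rw [hb]; linarith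
    have h1 := le_csSup hbdd (Set.mem_image_of_mem f hmem)
    have h2 : 0 ≤ f (σ + min t 1 / 2) := hfnn _ (by linarith)
    rw [hM]; linarith
  -- f σ ≤ M by continuity
  have hfaM : f σ ≤ M := by
    have hne : (nhdsWithin σ (Set.Ioo σ b)).NeBot :=
      mem_closure_iff_nhdsWithin_neBot.mp
        (by rw [closure_Ioo hab.ne]; exact ⟨le_refl σ, hab.le⟩)
    haveI := hne
    refine le_of_tendsto (x := nhdsWithin σ (Set.Ioo σ b)) ((hfcont.tendsto σ).mono_left nhdsWithin_le_nhds) ?_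
    filter_upwards [self_mem_nhdsWithin] with s hs
    rw [hM]
    exact le_csSup hbdd (Set.mem_image_of_mem f hs)
  -- the weighted integrand
  obtain ⟨g, hg⟩ : ∃ g : ℝ → ℝ, g = fun τ => Real.exp (-μ * (b - τ)) * ξ τ := ⟨_, rfl⟩
  have hgint : ∀ u v : ℝ, IntervalIntegrable g MeasureTheory.volume u v := by
    intro u v
    rw [hg]
    exact (hξint u v).continuousOn_mul (Continuous.continuousOn (by continuity))
  -- main pointwise step from hineq
  have hstep : ν b ≤ Real.exp (-μ * t) * ν σ + ∫ τ in σ..b, g τ := by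
    have key := hineq σ b hσ hab
    have hmul := mul_le_mul_of_nonneg_left key (Real.exp_pos (-(μ * b))).le
    have hL : Real.exp (-(μ * b)) * (Real.exp (μ * b) * ν b) = ν b := by
      rw [← mul_assoc, ← Real.exp_add]; simp
    have hR1 : Real.exp (-(μ * b)) * (Real.exp (μ * σ) * ν σ)
        = Real.exp (-μ * t) * ν σ := by
      rw [← mul_assoc, ← Real.exp_add]
      congr 2
      rw [hb]; ring
    have hR2 : Real.exp (-(μ * b)) * (∫ τ in σ..b, Real.exp (μ * τ) * ξ τ)
        = ∫ τ in σ..b, g τ := by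
      rw [← intervalIntegral.integral_const_mul]
      apply intervalIntegral.integral_congr
      intro τ _
      rw [hg]
      show Real.exp (-(μ * b)) * (Real.exp (μ * τ) * ξ τ) = _
      rw [← mul_assoc, ← Real.exp_add]
      congr 2
      ring
    rw [mul_add, hL, hR1, hR2] at hmul
    exact hmul
  -- the integer K
  obtain ⟨K, hK⟩ : ∃ K : ℕ, K = ⌈t⌉₊ - 1 := ⟨_, rfl⟩
  have hceil1 : 1 ≤ ⌈t⌉₊ := Nat.one_le_ceil_iff.mpr ht
  have hKcast : (K : ℝ) = (⌈t⌉₊ : ℝ) - 1 := by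
    rw [hK, Nat.cast_sub hceil1, Nat.cast_one]
  have hKlt : (K : ℝ) < t := by
    have h1 : (⌈t⌉₊ : ℝ) < t + 1 := Nat.ceil_lt_add_one ht.le
    rw [hKcast]; linarith
  have hKge : t ≤ (K : ℝ) + 1 := by
    have := Nat.le_ceil t
    rw [hKcast]; linarith
  -- splitting the integral
  have hsplit : (∫ τ in σ..b, g τ)
      = (∫ τ in σ..(b - K), g τ) + ∫ τ in (b - K)..b, g τ := by
    rw [intervalIntegral.integral_add_adjacent_intervals (hgint σ (b - K)) (hgint (b - K) b)]
  -- remainder bound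
  have hrem : (∫ τ in σ..(b - K), g τ) ≤ M := by
    have hab' : σ ≤ b - K := by rw [hb]; linarith
    have h1 : (∫ τ in σ..(b - K), g τ) ≤ ∫ τ in σ..(b - K), ξ τ := by
      apply intervalIntegral.integral_mono_on hab' (hgint _ _) (hξint _ _)
      intro τ hτ
      have hτ0 : (0:ℝ) ≤ τ := le_trans hσ hτ.1
      have hτb : τ ≤ b := by
        have := hτ.2
        have hKnn : (0:ℝ) ≤ (K : ℝ) := Nat.cast_nonneg K
        linarith
      have hexp : Real.exp (-μ * (b - τ)) ≤ 1 := by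
        have hle : -μ * (b - τ) ≤ 0 := by nlinarith
        calc Real.exp (-μ * (b - τ)) ≤ Real.exp 0 := Real.exp_le_exp.mpr hle
          _ = 1 := Real.exp_zero
      rw [hg]
      show Real.exp (-μ * (b - τ)) * ξ τ ≤ ξ τ
      calc Real.exp (-μ * (b - τ)) * ξ τ
          ≤ 1 * ξ τ := mul_le_mul_of_nonneg_right hexp (hξ τ hτ0)
        _ = ξ τ := one_mul _
    have h2 : (∫ τ in σ..(b - K), ξ τ) ≤ f σ := by
      have hle : b - K ≤ σ + 1 := by rw [hb]; linarith
      have hab'' : σ ≤ b - K := hab'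
      have hadd := intervalIntegral.integral_add_adjacent_intervals
        (hξint σ (b - K)) (hξint (b - K) (σ + 1))
      have hnn : 0 ≤ ∫ τ in (b - K)..(σ + 1), ξ τ := by
        apply intervalIntegral.integral_nonneg hle
        intro τ hτ
        exact hξ τ (le_trans (le_trans hσ hab'') hτ.1)
      have hfa : f σ = ∫ τ in σ..(σ + 1), ξ τ := by rw [hf]
      rw [hfa, ← hadd]
      linarith
    linarith [hfaM]
  -- geometric part
  have hr0 : (0:ℝ) ≤ Real.exp (-μ) := (Real.exp_pos _).le
  have hr1 : Real.exp (-μ) < 1 := by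
    calc Real.exp (-μ) < Real.exp 0 := Real.exp_lt_exp.mpr (by linarith)
      _ = 1 := Real.exp_zero
  have hgeom : (∫ τ in (b - K)..b, g τ) ≤ (1 - Real.exp (-μ))⁻¹ * M := by
    have hsum : (∑ i ∈ Finset.range K, ∫ τ in (b - K + i)..(b - K + (i + 1 : ℕ)), g τ)
        = ∫ τ in (b - K)..b, g τ := by
      have := intervalIntegral.sum_integral_adjacent_intervals
        (a := fun i : ℕ => b - K + i) (n := K) (fun i _ => hgint _ _)
      simpa using this
    have hterm : ∀ i ∈ Finset.range K,
        (∫ τ in (b - K + i)..(b - K + (i + 1 : ℕ)), g τ)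
          ≤ Real.exp (-μ) ^ (K - 1 - i) * M := by
      intro i hi
      have hiK : i < K := Finset.mem_range.mp hi
      obtain ⟨s, hs⟩ : ∃ s : ℝ, s = b - K + i := ⟨_, rfl⟩
      have hend : b - (K:ℝ) + ((i + 1 : ℕ) : ℝ) = s + 1 := by push_cast; rw [hs]; ring
      have hsa : σ < s := by
        have hicast : (0:ℝ) ≤ (i:ℝ) := Nat.cast_nonneg i
        rw [hs, hb]; linarith
      have hsb : s + 1 ≤ b := by
        have h1 : (i:ℝ) + 1 ≤ (K:ℝ) := by exact_mod_cast hiK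
        rw [hs]; linarith
      have hcastKi : ((K - 1 - i : ℕ) : ℝ) = (K:ℝ) - 1 - i := by
        rw [Nat.sub_sub, Nat.cast_sub (by omega)]
        push_cast
        ring
      have hbound : (∫ τ in s..(s+1), g τ)
          ≤ ∫ τ in s..(s+1), Real.exp (-μ) ^ (K - 1 - i) * ξ τ := by
        apply intervalIntegral.integral_mono_on (by linarith) (hgint _ _)
          ((hξint _ _).const_mul _)
        intro τ hτ
        have hτ0 : (0:ℝ) ≤ τ := le_trans (le_trans hσ hsa.le) hτ.1
        have hexp : Real.exp (-μ * (b - τ)) ≤ Real.exp (-μ) ^ (K - 1 - i) := by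
          rw [← Real.exp_nat_mul]
          apply Real.exp_le_exp.mpr
          rw [hcastKi, hs] at *
          nlinarith [hτ.2, hsb]
        rw [hg]
        show Real.exp (-μ * (b - τ)) * ξ τ ≤ _
        exact mul_le_mul_of_nonneg_right hexp (hξ τ hτ0)
      have hfs : (∫ τ in s..(s+1), Real.exp (-μ) ^ (K - 1 - i) * ξ τ)
          = Real.exp (-μ) ^ (K - 1 - i) * f s := by
        rw [hf, intervalIntegral.integral_const_mul]
      have hfsM : f s ≤ M := by
        rw [hM]
        exact le_csSup hbdd (Set.mem_image_of_mem f ⟨hsa, by linarith⟩)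
      calc (∫ τ in (b - K + i)..(b - K + (i + 1 : ℕ)), g τ)
          = ∫ τ in s..(s+1), g τ := by rw [← hend, hs]
        _ ≤ ∫ τ in s..(s+1), Real.exp (-μ) ^ (K - 1 - i) * ξ τ := hbound
        _ = Real.exp (-μ) ^ (K - 1 - i) * f s := hfs
        _ ≤ Real.exp (-μ) ^ (K - 1 - i) * M :=
            mul_le_mul_of_nonneg_left hfsM (pow_nonneg hr0 _)
    have hsumle : (∫ τ in (b - K)..b, g τ)
        ≤ ∑ i ∈ Finset.range K, Real.exp (-μ) ^ (K - 1 - i) * M := by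
      rw [← hsum]
      exact Finset.sum_le_sum hterm
    have hreflect : (∑ i ∈ Finset.range K, Real.exp (-μ) ^ (K - 1 - i) * M)
        = ∑ i ∈ Finset.range K, Real.exp (-μ) ^ i * M :=
      Finset.sum_range_reflect (fun j => Real.exp (-μ) ^ j * M) K
    have hgeomsum : (∑ i ∈ Finset.range K, Real.exp (-μ) ^ i)
        ≤ (1 - Real.exp (-μ))⁻¹ := by
      have h1 : (∑ i ∈ Finset.range K, Real.exp (-μ) ^ i)
          ≤ ∑' i : ℕ, Real.exp (-μ) ^ i :=
        Summable.sum_le_tsum (Finset.range K) (fun i _ => pow_nonneg hr0 i)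
          (summable_geometric_of_lt_one hr0 hr1)
      rwa [tsum_geometric_of_lt_one hr0 hr1] at h1
    calc (∫ τ in (b - K)..b, g τ)
        ≤ ∑ i ∈ Finset.range K, Real.exp (-μ) ^ i * M := by
          rw [← hreflect]; exact hsumle
      _ = (∑ i ∈ Finset.range K, Real.exp (-μ) ^ i) * M := by rw [Finset.sum_mul]
      _ ≤ (1 - Real.exp (-μ))⁻¹ * M := mul_le_mul_of_nonneg_right hgeomsum hMnn
  -- conclude
  rw [hsplit] at hstep
  nlinarith [hrem, hgeom, hstep]
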